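/- Rodriguez-type formula: with S0 = U1∘Y − Y∘U1 and S1 = T1∘Y − Y∘T1, where (U1 f)(x) = −(T1 f)(x) − x·f(x), one has for every n ∈ ℤ≥0: (S1∘S0)^n applied to the constant polynomial 1 equals (−1)^n·(2t0+2t1+1)_{2n}·p_{2n}, and S0((S1∘S0)^n(1)) = (−1)^{n+1}·(2t0+2t1+1)_{2n+1}·p_{2n+1}. -/

import Mathlib

open Polynomial

lemma aux_coeff_comp_neg (f : Polynomial ℂ) (k : ℕ) :
    (f.comp (-X)).coeff k = (-1)^k * f.coeff k := by
  induction f using Polynomial.induction_on' with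
  | add p q hp hq => simp [add_comp, hp, hq, mul_add]
  | monomial n r =>
      rw [← C_mul_X_pow_eq_monomial]
      rw [mul_comp, C_comp, pow_comp, X_comp, neg_pow]
      have hneg : ((-1 : Polynomial ℂ))^n = C ((-1:ℂ)^n) := by
        rw [map_pow, map_neg, map_one]
      rw [hneg, ← mul_assoc, ← map_mul]
      rw [coeff_C_mul, coeff_C_mul, coeff_X_pow]
      by_cases h : k = n
      · subst h; simp [mul_comm]
      · simp [Ne.symm h, h]

lemma aux_indep (p : ℕ → Polynomial ℂ)
    (hmon : ∀ m, (p m).Monic) (hdeg : ∀ m, (p m).natDegree = m) :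
    ∀ (M : ℕ) (d : ℕ → ℂ),
      (∑ j ∈ Finset.range (M+1), C (d j) * p j) = 0 → ∀ j ≤ M, d j = 0 := by
  intro M
  induction M with
  | zero =>
      intro d h j hj
      interval_cases j
      have h0 : p 0 = 1 := (hmon 0).natDegree_eq_zero.mp (hdeg 0)
      simp [h0] at h
      simpa [C_eq_zero] using h
  | succ M ih =>
      intro d h j hj
      have hdM : d (M+1) = 0 := by
        have := congrArg (fun q => Polynomial.coeff q (M+1)) h
        simp only [Polynomial.finset_sum_coeff, coeff_C_mul, coeff_zero] at this
        rw [Finset.sum_eq_single (M+1)] at this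
        · have hc : (p (M+1)).coeff (M+1) = 1 := by
            have := (hmon (M+1)).coeff_natDegree
            rwa [hdeg (M+1)] at this
          simpa [hc] using this
        · intro i hi hne
          have hi' : i < M + 1 := by
            rcases Nat.lt_succ_iff_lt_or_eq.mp (Finset.mem_range.mp hi) with h' | h'
            · exact h'
            · exact absurd h' hne
          have : (p i).coeff (M+1) = 0 :=
            coeff_eq_zero_of_natDegree_lt (by rw [hdeg i]; omega)
          simp [this]
        · intro h'; exact absurd (Finset.self_mem_range_succ (M+1)) h'
      rcases eq_or_lt_of_le hj with hj' | hj'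
      · rw [hj']; exact hdM
      apply ih d _ j (Nat.lt_succ_iff.mp hj')
      rw [Finset.sum_range_succ, hdM] at h
      simpa using h

lemma aux_rep (p : ℕ → Polynomial ℂ)
    (hmon : ∀ m, (p m).Monic) (hdeg : ∀ m, (p m).natDegree = m) :
    ∀ (N : ℕ) (q : Polynomial ℂ), q.natDegree ≤ N →
      ∃ d : ℕ → ℂ, q = ∑ j ∈ Finset.range (N+1), C (d j) * p j := by
  intro N
  induction N with
  | zero =>
      intro q hq
      refine ⟨fun _ => q.coeff 0, ?_⟩
      have h0 : p 0 = 1 := (hmon 0).natDegree_eq_zero.mp (hdeg 0)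
      simp [h0]
      exact eq_C_of_natDegree_le_zero hq
  | succ N ih =>
      intro q hq
      set e := q.coeff (N+1) with he
      have hq' : (q - C e * p (N+1)).natDegree ≤ N := by
        rw [natDegree_le_iff_coeff_eq_zero]
        intro m hm
        rw [coeff_sub, coeff_C_mul]
        rcases eq_or_lt_of_le (Nat.succ_le_of_lt hm) with h' | h'
        · have hc : (p (N+1)).coeff m = 1 := by
            rw [← h']
            have := (hmon (N+1)).coeff_natDegree
            rwa [hdeg (N+1)] at this
          rw [hc, ← h', ← he]; ring
        · have h1 : q.coeff m = 0 := coeff_eq_zero_of_natDegree_lt (by omega)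
          have h2 : (p (N+1)).coeff m = 0 :=
            coeff_eq_zero_of_natDegree_lt (by rw [hdeg]; omega)
          rw [h1, h2]; ring
      obtain ⟨d', hd'⟩ := ih _ hq'
      refine ⟨fun j => if j = N+1 then e else d' j, ?_⟩
      have : ∑ j ∈ Finset.range (N+1), C (if j = N+1 then e else d' j) * p j
          = ∑ j ∈ Finset.range (N+1), C (d' j) * p j := by
        apply Finset.sum_congr rfl
        intro j hj
        rw [if_neg (by have := Finset.mem_range.mp hj; omega)]
      rw [Finset.sum_range_succ, this, ← hd']
      simp

lemma aux_uniq (p : ℕ → Polynomial ℂ)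
    (hmon : ∀ m, (p m).Monic) (hdeg : ∀ m, (p m).natDegree = m)
    (Y : Polynomial ℂ → Polynomial ℂ) (γ : ℕ → ℂ)
    (Yp : ∀ m, Y (p m) = C (γ m) * p m)
    (Yadd : ∀ f g, Y (f + g) = Y f + Y g)
    (YC : ∀ (r : ℂ) f, Y (C r * f) = C r * Y f)
    (hγ : ∀ j M : ℕ, j < M → γ j ≠ γ M)
    (M : ℕ) (q : Polynomial ℂ) (hq : q.natDegree ≤ M)
    (hYq : Y q = C (γ M) * q) :
    q = C (q.coeff M) * p M := by
  have Y0 : Y 0 = 0 := by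
    have := YC 0 0
    simpa using this
  have Ysum : ∀ (s : Finset ℕ) (d : ℕ → ℂ),
      Y (∑ j ∈ s, C (d j) * p j) = ∑ j ∈ s, C (d j * γ j) * p j := by
    intro s d
    induction s using Finset.induction_on with
    | empty => simpa using Y0
    | insert _ _ hnotmem ih =>
        rw [Finset.sum_insert hnotmem, Finset.sum_insert hnotmem, Yadd, ih, YC, Yp]
        rw [← mul_assoc, ← map_mul]
  obtain ⟨d, hd⟩ := aux_rep p hmon hdeg M q hq
  have h1 : ∑ j ∈ Finset.range (M+1), C (d j * γ j) * p j
      = ∑ j ∈ Finset.range (M+1), C (γ M * d j) * p j := by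
    rw [← Ysum, ← hd, hYq, hd, Finset.mul_sum]
    apply Finset.sum_congr rfl
    intro j _
    rw [← mul_assoc, ← map_mul]
  have h2 : ∑ j ∈ Finset.range (M+1), C (d j * γ j - γ M * d j) * p j = 0 := by
    have : ∀ j, C (d j * γ j - γ M * d j) * p j
        = C (d j * γ j) * p j - C (γ M * d j) * p j := by
      intro j; rw [map_sub, sub_mul]
    simp only [this, Finset.sum_sub_distrib, h1, sub_self]
  have hz := aux_indep p hmon hdeg M _ h2
  have hdj : ∀ j < M, d j = 0 := by
    intro j hj
    have := hz j (le_of_lt hj)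
    have hne : γ j - γ M ≠ 0 := sub_ne_zero.mpr (hγ j M hj)
    have : d j * (γ j - γ M) = 0 := by linear_combination this
    rcases mul_eq_zero.mp this with h | h
    · exact h
    · exact absurd h hne
  have hqM : q = C (d M) * p M := by
    rw [hd, Finset.sum_range_succ]
    rw [Finset.sum_eq_zero, zero_add]
    intro j hj
    rw [hdj j (Finset.mem_range.mp hj), map_zero, zero_mul]
  have hcoeff : q.coeff M = d M := by
    rw [hqM, coeff_C_mul]
    have : (p M).coeff M = 1 := by
      have := (hmon M).coeff_natDegree
      rwa [hdeg M] at this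
    rw [this, mul_one]
  rw [hcoeff, hqM]

set_option maxHeartbeats 1000000 in
/-- Rodriguez-type formula: with `S0 = U1∘Y − Y∘U1`, `S1 = T1∘Y − Y∘T1`,
`(U1 f)(x) = −(T1 f)(x) − x·f(x)`: for every `n`,
`(S1∘S0)^n 1 = (−1)^n·(2t0+2t1+1)_{2n}·p_{2n}` and
`S0((S1∘S0)^n 1) = (−1)^{n+1}·(2t0+2t1+1)_{2n+1}·p_{2n+1}`. -/
theorem statement13 (t0 u0 t1 u1 a b c d : ℂ)
    (ha : a = t1 + u1) (hb : b = t1 - u1)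
    (hc : c = t0 + u0 + 1/2) (hd : d = t0 - u0 + 1/2)
    (hreg : ∀ k : ℕ, 2*(t0 + t1) ≠ -(k : ℂ))
    (T0 T1 : Polynomial ℂ → Polynomial ℂ)
    (hT0 : ∀ (f : Polynomial ℂ) (x : ℂ),
      (1 - 2*x) * ((T0 f).eval x - t0 * f.eval x) =
        (c - x) * (d - x) * (f.eval (1 - x) - f.eval x))
    (hT1 : ∀ (f : Polynomial ℂ) (x : ℂ),
      (2*x) * ((T1 f).eval x - t1 * f.eval x) =
        (a + x) * (b + x) * (f.eval (-x) - f.eval x))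
    (γ : ℕ → ℂ)
    (hγe : ∀ n : ℕ, γ (2*n) = t0 + t1 + n)
    (hγo : ∀ n : ℕ, γ (2*n+1) = -(t0 + t1 + (n+1)))
    (p : ℕ → Polynomial ℂ)
    (hp : ∀ m : ℕ, (p m).Monic ∧ (p m).natDegree = m ∧
      T0 (p m) + T1 (p m) = γ m • p m)
    (Y U1 S0 S1 : Polynomial ℂ → Polynomial ℂ)
    (hY : ∀ f : Polynomial ℂ, Y f = T0 f + T1 f)
    (hU1 : ∀ (f : Polynomial ℂ) (x : ℂ),
      (U1 f).eval x = -(T1 f).eval x - x * f.eval x)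
    (hS0 : ∀ f : Polynomial ℂ, S0 f = U1 (Y f) - Y (U1 f))
    (hS1 : ∀ f : Polynomial ℂ, S1 f = T1 (Y f) - Y (T1 f)) :
    ∀ n : ℕ,
      (S1 ∘ S0)^[n] 1 =
        ((-1)^n * ∏ i ∈ Finset.range (2*n), (2*t0 + 2*t1 + 1 + (i : ℂ))) • p (2*n) ∧
      S0 ((S1 ∘ S0)^[n] 1) =
        ((-1)^(n+1) * ∏ i ∈ Finset.range (2*n+1), (2*t0 + 2*t1 + 1 + (i : ℂ))) •
          p (2*n+1) := by
  subst ha hb hc hd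
  -- infinite sets for generic-point arguments
  have hinf0 : Set.Infinite {x : ℂ | x ≠ 0} := by
    have := (Set.finite_singleton (0:ℂ)).infinite_compl
    convert this using 1
    ext x; simp
  have hinf1 : Set.Infinite {x : ℂ | (1 : ℂ) - 2*x ≠ 0} := by
    have := (Set.finite_singleton ((1:ℂ)/2)).infinite_compl
    apply this.mono
    intro x hx
    simp only [Set.mem_compl_iff, Set.mem_singleton_iff] at hx
    simp only [Set.mem_setOf_eq]
    intro h
    apply hx
    field_simp
    linear_combination -h
  -- linearity of T1 and T0
  have T1a : ∀ f g, T1 (f + g) = T1 f + T1 g := by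
    intro f g
    apply Polynomial.eq_of_infinite_eval_eq
    apply hinf0.mono
    intro x hx
    simp only [Set.mem_setOf_eq] at hx ⊢
    have h2x : (2:ℂ)*x ≠ 0 := by simpa using hx
    apply mul_left_cancel₀ h2x
    have hA := hT1 (f+g) x
    simp only [eval_add] at hA ⊢
    linear_combination hA - hT1 f x - hT1 g x
  have T1C : ∀ (r : ℂ) f, T1 (C r * f) = C r * T1 f := by
    intro r f
    apply Polynomial.eq_of_infinite_eval_eq
    apply hinf0.mono
    intro x hx
    simp only [Set.mem_setOf_eq] at hx ⊢
    have h2x : (2:ℂ)*x ≠ 0 := by simpa using hx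
    apply mul_left_cancel₀ h2x
    have hA := hT1 (C r * f) x
    simp only [eval_mul, eval_C] at hA ⊢
    linear_combination hA - r * hT1 f x
  have T0a : ∀ f g, T0 (f + g) = T0 f + T0 g := by
    intro f g
    apply Polynomial.eq_of_infinite_eval_eq
    apply hinf1.mono
    intro x hx
    simp only [Set.mem_setOf_eq] at hx ⊢
    apply mul_left_cancel₀ hx
    have hA := hT0 (f+g) x
    simp only [eval_add] at hA ⊢
    linear_combination hA - hT0 f x - hT0 g x
  have T0C : ∀ (r : ℂ) f, T0 (C r * f) = C r * T0 f := by
    intro r f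
    apply Polynomial.eq_of_infinite_eval_eq
    apply hinf1.mono
    intro x hx
    simp only [Set.mem_setOf_eq] at hx ⊢
    apply mul_left_cancel₀ hx
    have hA := hT0 (C r * f) x
    simp only [eval_mul, eval_C] at hA ⊢
    linear_combination hA - r * hT0 f x
  have T1neg : ∀ f, T1 (-f) = -T1 f := by
    intro f
    have := T1C (-1) f
    simpa using this
  have T0neg : ∀ f, T0 (-f) = -T0 f := by
    intro f
    have := T0C (-1) f
    simpa using this
  have T0s : ∀ f g, T0 (f - g) = T0 f - T0 g := by
    intro f g
    rw [sub_eq_add_neg, T0a, T0neg, ← sub_eq_add_neg]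
  have Ya : ∀ f g, Y (f + g) = Y f + Y g := by
    intro f g; rw [hY, hY, hY, T0a, T1a]; ring
  have YC : ∀ (r : ℂ) f, Y (C r * f) = C r * Y f := by
    intro r f; rw [hY, hY, T0C, T1C]; ring
  have Ys : ∀ f g, Y (f - g) = Y f - Y g := by
    intro f g; rw [hY, hY, hY, T0s, sub_eq_add_neg f g, T1a, T1neg]; ring
  have U1form : ∀ f, U1 f = -T1 f - X * f := by
    intro f
    apply Polynomial.funext
    intro x
    have h := hU1 f x
    simp only [eval_sub, eval_neg, eval_mul, eval_X]
    linear_combination h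
  have U1C : ∀ (r : ℂ) f, U1 (C r * f) = C r * U1 f := by
    intro r f
    rw [U1form, U1form, T1C]; ring
  -- quadratic relations
  have Q1 : ∀ f, T1 (T1 f) = C (t1^2) * f := by
    intro f
    apply Polynomial.eq_of_infinite_eval_eq
    apply hinf0.mono
    intro x hx
    simp only [Set.mem_setOf_eq] at hx ⊢
    have h2x : (2:ℂ)*x ≠ 0 := by simpa using hx
    apply mul_left_cancel₀ h2x
    apply mul_left_cancel₀ h2x
    have hA := hT1 (T1 f) x
    have hB := hT1 f x
    have hBn := hT1 f (-x)
    simp only [eval_mul, eval_C, neg_neg] at hA hB hBn ⊢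
    linear_combination (2*x) * hA - ((t1+u1+x)*(t1-u1+x)) * hBn
      + (t1*(2*x) - (t1+u1+x)*(t1-u1+x)) * hB
  have Q0 : ∀ f, T0 (T0 f) = C (t0^2) * f := by
    intro f
    apply Polynomial.eq_of_infinite_eval_eq
    apply hinf1.mono
    intro x hx
    simp only [Set.mem_setOf_eq] at hx ⊢
    apply mul_left_cancel₀ hx
    apply mul_left_cancel₀ hx
    have hA := hT0 (T0 f) x
    have hB := hT0 f x
    have hBs := hT0 f (1-x)
    simp only [eval_mul, eval_C, sub_sub_cancel] at hA hB hBs ⊢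
    linear_combination (1-2*x) * hA
      - ((t0+u0+1/2-x)*(t0-u0+1/2-x)) * hBs
      + (t0*(1-2*x) - (t0+u0+1/2-x)*(t0-u0+1/2-x)) * hB
  have A1 : ∀ f, T1 (X * f) + X * T1 f = -(C ((t1+u1)*(t1-u1)) + X^2) * f := by
    intro f
    apply Polynomial.eq_of_infinite_eval_eq
    apply hinf0.mono
    intro x hx
    simp only [Set.mem_setOf_eq] at hx ⊢
    have h2x : (2:ℂ)*x ≠ 0 := by simpa using hx
    apply mul_left_cancel₀ h2x
    have hA := hT1 (X * f) x
    have hB := hT1 f x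
    simp only [eval_mul, eval_add, eval_neg, eval_pow, eval_C, eval_X] at hA hB ⊢
    linear_combination hA + x * hB
  have A0 : ∀ f, T0 (X * f) + X * T0 f
      = T0 f + (C ((t0+u0+1/2)*(t0-u0+1/2) - t0) - X + X^2) * f := by
    intro f
    apply Polynomial.eq_of_infinite_eval_eq
    apply hinf1.mono
    intro x hx
    simp only [Set.mem_setOf_eq] at hx ⊢
    apply mul_left_cancel₀ hx
    have hA := hT0 (X * f) x
    have hB := hT0 f x
    simp only [eval_mul, eval_add, eval_sub, eval_pow, eval_C, eval_X] at hA hB ⊢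
    linear_combination hA + (x - 1) * hB
  -- anticommutators with Y
  have hT0Y : ∀ g, T0 g = Y g - T1 g := by intro g; rw [hY]; ring
  have YT1 : ∀ f, T1 (Y f) + Y (T1 f) = Y (Y f) + C (t1^2 - t0^2) * f := by
    intro f
    have h := Q0 f
    rw [hT0Y f] at h
    rw [T0s, hT0Y (Y f), hT0Y (T1 f), Q1 f] at h
    apply Polynomial.funext; intro x
    have h' := congrArg (eval x) h
    simp only [eval_add, eval_sub, eval_mul, eval_C] at h' ⊢
    linear_combination -h'
  have YU1 : ∀ f, U1 (Y f) + Y (U1 f)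
      = -Y (Y f) - Y f - U1 f + C (u0^2 - u1^2 - 1/4) * f := by
    intro f
    have e1 : U1 (Y f) = -T1 (Y f) - X * Y f := U1form (Y f)
    have e2 : T1 (Y f) = T1 (T0 f) + T1 (T1 f) := by rw [hY f, T1a]
    have e3 : Y (U1 f) = -(T0 (T1 f) + T0 (X * f)) - (T1 (T1 f) + T1 (X * f)) := by
      rw [hY (U1 f), U1form f, show -T1 f - X * f = -(T1 f + X * f) from by ring,
        T0neg, T1neg, T0a, T1a]
      ring
    have e4 : Y (Y f) = T0 (T0 f) + T0 (T1 f) + (T1 (T0 f) + T1 (T1 f)) := by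
      rw [hY (Y f), hY f, T0a, T1a]
    apply Polynomial.funext; intro x
    have h1 := congrArg (eval x) e1
    have h2 := congrArg (eval x) e2
    have h3 := congrArg (eval x) e3
    have h4 := congrArg (eval x) e4
    have h5 := congrArg (eval x) (hY f)
    have h6 := congrArg (eval x) (U1form f)
    have h7 := congrArg (eval x) (Q0 f)
    have h8 := congrArg (eval x) (Q1 f)
    have h9 := congrArg (eval x) (A0 f)
    have h10 := congrArg (eval x) (A1 f)
    simp only [eval_add, eval_sub, eval_neg, eval_mul, eval_pow, eval_C, eval_X]
      at h1 h2 h3 h4 h5 h6 h7 h8 h9 h10 ⊢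
    linear_combination h1 - h2 + h3 + h4 + (1 - x) * h5 + h6 + h7 - h8 - h9 - h10
  -- polynomial-level master identity for T1 (for degree/coefficient bookkeeping)
  have HT1 : ∀ f : Polynomial ℂ, C 2 * X * (T1 f - C t1 * f)
      = (C (t1+u1) + X) * (C (t1-u1) + X) * (f.comp (-X) - f) := by
    intro f
    apply Polynomial.funext
    intro x
    have h := hT1 f x
    simp only [eval_mul, eval_sub, eval_add, eval_C, eval_X, eval_comp, eval_neg]
    linear_combination h
  have hX2 : (C 2 * X : Polynomial ℂ) ≠ 0 := by
    intro h
    have := congrArg (fun q => Polynomial.eval 1 q) h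
    simp at this
  have T1deg : ∀ (f : Polynomial ℂ) (m : ℕ), f.natDegree ≤ m → (T1 f).natDegree ≤ m + 1 := by
    intro f m hm
    have hΔ : (f.comp (-X) - f).natDegree ≤ m := by
      refine le_trans (natDegree_sub_le _ _) (max_le ?_ hm)
      calc (f.comp (-X)).natDegree = f.natDegree * (-X : Polynomial ℂ).natDegree :=
            natDegree_comp
        _ ≤ m := by simp [hm]
    have hP : (((C (t1+u1) + X) * (C (t1-u1) + X) * (f.comp (-X) - f)) : Polynomial ℂ).natDegree
        ≤ m + 2 := by
      refine le_trans natDegree_mul_le ?_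
      have h1 : (C (t1+u1) + X : Polynomial ℂ).natDegree ≤ 1 :=
        le_trans (natDegree_add_le _ _) (by simp)
      have h2 : (C (t1-u1) + X : Polynomial ℂ).natDegree ≤ 1 :=
        le_trans (natDegree_add_le _ _) (by simp)
      have h12 : ((C (t1+u1) + X) * (C (t1-u1) + X) : Polynomial ℂ).natDegree ≤ 2 :=
        le_trans natDegree_mul_le (by omega)
      omega
    by_cases hg : T1 f - C t1 * f = 0
    · have h' : T1 f = C t1 * f := by rwa [sub_eq_zero] at hg
      rw [h']
      exact le_trans natDegree_mul_le (by simp; omega)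
    · have hdm : (C 2 * X * (T1 f - C t1 * f)).natDegree
          = 1 + (T1 f - C t1 * f).natDegree := by
        rw [natDegree_mul hX2 hg]
        congr 1
        simp [natDegree_C_mul_X (2:ℂ) two_ne_zero]
      have h3 : (C 2 * X * (T1 f - C t1 * f)).natDegree ≤ m + 2 := by
        rw [HT1 f]; exact hP
      rw [hdm] at h3
      have h4 : (T1 f - C t1 * f).natDegree ≤ m + 1 := by omega
      have h5 : T1 f = (T1 f - C t1 * f) + C t1 * f := by ring
      rw [h5]
      refine le_trans (natDegree_add_le _ _) (max_le h4 ?_)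
      exact le_trans natDegree_mul_le (by simp; omega)
  have T1coeff : ∀ (f : Polynomial ℂ) (m : ℕ), f.natDegree ≤ m →
      2 * (T1 f).coeff (m+1) = ((-1:ℂ)^m - 1) * f.coeff m := by
    intro f m hm
    have hsh : C 2 * (X * (T1 f - C t1 * f))
        = C (t1+u1) * (C (t1-u1) * (f.comp (-X) - f))
          + C (t1+u1) * (X * (f.comp (-X) - f))
          + C (t1-u1) * (X * (f.comp (-X) - f))
          + X * (X * (f.comp (-X) - f)) := by
      linear_combination HT1 f
    have hz1 : f.coeff (m+1) = 0 := coeff_eq_zero_of_natDegree_lt (by omega)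
    have hz2 : f.coeff (m+2) = 0 := coeff_eq_zero_of_natDegree_lt (by omega)
    have hco := congrArg (fun q : Polynomial ℂ => q.coeff (m+2)) hsh
    simp only [coeff_add, coeff_C_mul] at hco
    rw [show m + 2 = (m+1) + 1 from rfl] at hco
    simp only [coeff_X_mul, coeff_sub, coeff_C_mul, aux_coeff_comp_neg, hz1, hz2] at hco
    linear_combination hco
  -- eigenvalue facts
  have Ypall : ∀ m, Y (p m) = C (γ m) * p m := by
    intro m
    rw [hY, (hp m).2.2, smul_eq_C_mul]
  have hγne : ∀ j M : ℕ, j < M → γ j ≠ γ M := by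
    intro j M hlt heq
    rcases Nat.even_or_odd j with ⟨r, hr⟩ | ⟨r, hr⟩ <;>
      rcases Nat.even_or_odd M with ⟨s, hs⟩ | ⟨s, hs⟩
    · rw [show j = 2*r from by omega, show M = 2*s from by omega, hγe, hγe] at heq
      have : (r : ℂ) = s := by linear_combination heq
      have : r = s := Nat.cast_inj.mp this
      omega
    · rw [show j = 2*r from by omega, show M = 2*s+1 from by omega, hγe, hγo] at heq
      exact hreg (r+s+1) (by push_cast; linear_combination heq)
    · rw [show j = 2*r+1 from by omega, show M = 2*s from by omega, hγo, hγe] at heq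
      exact hreg (r+s+1) (by push_cast; linear_combination -heq)
    · rw [show j = 2*r+1 from by omega, show M = 2*s+1 from by omega, hγo, hγo] at heq
      have : (r : ℂ) = s := by linear_combination -heq
      have : r = s := Nat.cast_inj.mp this
      omega
  -- even case: S0 shifts p(2k) to p(2k+1)
  have evenCase : ∀ k : ℕ,
      S0 (p (2*k)) = C (-(2*(t0+t1+(k:ℂ))+1)) * p (2*k+1) := by
    intro k
    have hmon := (hp (2*k)).1
    have hdeg := (hp (2*k)).2.1
    have Ypm : Y (p (2*k)) = C (γ (2*k)) * p (2*k) := Ypall (2*k)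
    have hYU : Y (U1 (p (2*k))) = C (-(γ (2*k)+1)) * U1 (p (2*k))
        + C (u0^2-u1^2-1/4 - (γ (2*k))^2 - γ (2*k)) * p (2*k) := by
      have h := YU1 (p (2*k))
      rw [Ypm, U1C, YC, Ypm] at h
      apply Polynomial.funext; intro x
      have h' := congrArg (eval x) h
      simp only [eval_add, eval_sub, eval_neg, eval_mul, eval_C] at h' ⊢
      linear_combination h'
    have hS0e : S0 (p (2*k)) = C (2*γ (2*k) + 1) * U1 (p (2*k))
        - C (u0^2-u1^2-1/4 - (γ (2*k))^2 - γ (2*k)) * p (2*k) := by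
      have h := hS0 (p (2*k))
      rw [Ypm, U1C, hYU] at h
      apply Polynomial.funext; intro x
      have h' := congrArg (eval x) h
      simp only [eval_add, eval_sub, eval_neg, eval_mul, eval_C] at h' ⊢
      linear_combination h'
    have hYS0 : Y (S0 (p (2*k))) = C (γ (2*k+1)) * S0 (p (2*k)) := by
      have h : Y (S0 (p (2*k)))
          = C (2*γ (2*k) + 1) * (C (-(γ (2*k)+1)) * U1 (p (2*k))
              + C (u0^2-u1^2-1/4 - (γ (2*k))^2 - γ (2*k)) * p (2*k))
            - C (u0^2-u1^2-1/4 - (γ (2*k))^2 - γ (2*k)) * (C (γ (2*k)) * p (2*k)) := by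
        rw [hS0e, Ys, YC, YC, hYU, Ypm]
      have hcon : γ (2*k+1) = -(γ (2*k)+1) := by
        rw [hγe k, hγo k]; ring
      rw [hcon]
      apply Polynomial.funext; intro x
      have h' := congrArg (eval x) h
      have h2' := congrArg (eval x) hS0e
      simp only [eval_add, eval_sub, eval_neg, eval_mul, eval_C] at h' h2' ⊢
      linear_combination h' + (γ (2*k) + 1) * h2'
    have honec : (p (2*k)).coeff (2*k) = 1 := by
      have := hmon.coeff_natDegree
      rwa [hdeg] at this
    have hcT1 : (T1 (p (2*k))).coeff (2*k+1) = 0 := by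
      have h := T1coeff (p (2*k)) (2*k) (le_of_eq hdeg)
      have hpow : ((-1:ℂ))^(2*k) = 1 := by rw [pow_mul]; norm_num
      rw [honec] at h
      linear_combination (h + hpow) / 2
    have hcU1 : (U1 (p (2*k))).coeff (2*k+1) = -1 := by
      rw [U1form, coeff_sub, coeff_neg, coeff_X_mul, hcT1, honec]
      norm_num
    have hdU1 : (U1 (p (2*k))).natDegree ≤ 2*k+1 := by
      rw [U1form]
      refine le_trans (natDegree_sub_le _ _) (max_le ?_ ?_)
      · rw [natDegree_neg]; exact T1deg _ _ (le_of_eq hdeg)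
      · refine le_trans natDegree_mul_le ?_
        simp [hdeg]
        omega
    have hdS0 : (S0 (p (2*k))).natDegree ≤ 2*k+1 := by
      rw [hS0e]
      refine le_trans (natDegree_sub_le _ _) (max_le ?_ ?_)
      · exact le_trans (natDegree_C_mul_le _ _) hdU1
      · exact le_trans (natDegree_C_mul_le _ _) (by omega)
    have hcS0 : (S0 (p (2*k))).coeff (2*k+1) = -(2*γ (2*k) + 1) := by
      have hz : (p (2*k)).coeff (2*k+1) = 0 :=
        coeff_eq_zero_of_natDegree_lt (by omega)
      rw [hS0e, coeff_sub, coeff_C_mul, coeff_C_mul, hcU1, hz]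
      ring
    have huniq := aux_uniq p (fun m => (hp m).1) (fun m => (hp m).2.1) Y γ Ypall Ya YC
      hγne (2*k+1) (S0 (p (2*k))) hdS0 hYS0
    rw [hcS0] at huniq
    rw [huniq, hγe k]
  -- odd case: S1 shifts p(2k+1) to p(2k+2)
  have oddCase : ∀ k : ℕ,
      S1 (p (2*k+1)) = C (2*(t0+t1+(k:ℂ)+1)) * p (2*k+2) := by
    intro k
    have hmon := (hp (2*k+1)).1
    have hdeg := (hp (2*k+1)).2.1
    have Ypm : Y (p (2*k+1)) = C (γ (2*k+1)) * p (2*k+1) := Ypall (2*k+1)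
    have hYT : Y (T1 (p (2*k+1))) = C (-(γ (2*k+1))) * T1 (p (2*k+1))
        + C ((γ (2*k+1))^2 + t1^2 - t0^2) * p (2*k+1) := by
      have h := YT1 (p (2*k+1))
      rw [Ypm, T1C, YC, Ypm] at h
      apply Polynomial.funext; intro x
      have h' := congrArg (eval x) h
      simp only [eval_add, eval_sub, eval_neg, eval_mul, eval_C] at h' ⊢
      linear_combination h'
    have hS1e : S1 (p (2*k+1)) = C (2*γ (2*k+1)) * T1 (p (2*k+1))
        - C ((γ (2*k+1))^2 + t1^2 - t0^2) * p (2*k+1) := by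
      have h := hS1 (p (2*k+1))
      rw [Ypm, T1C, hYT] at h
      apply Polynomial.funext; intro x
      have h' := congrArg (eval x) h
      simp only [eval_add, eval_sub, eval_neg, eval_mul, eval_C] at h' ⊢
      linear_combination h'
    have hYS1 : Y (S1 (p (2*k+1))) = C (γ (2*k+2)) * S1 (p (2*k+1)) := by
      have h : Y (S1 (p (2*k+1)))
          = C (2*γ (2*k+1)) * (C (-(γ (2*k+1))) * T1 (p (2*k+1))
              + C ((γ (2*k+1))^2 + t1^2 - t0^2) * p (2*k+1))
            - C ((γ (2*k+1))^2 + t1^2 - t0^2) * (C (γ (2*k+1)) * p (2*k+1)) := by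
        rw [hS1e, Ys, YC, YC, hYT, Ypm]
      have hcon : γ (2*k+2) = -(γ (2*k+1)) := by
        have h1 := hγe (k+1)
        rw [show 2*(k+1) = 2*k+2 from by ring] at h1
        rw [h1, hγo k]; push_cast; ring
      rw [hcon]
      apply Polynomial.funext; intro x
      have h' := congrArg (eval x) h
      have h2' := congrArg (eval x) hS1e
      simp only [eval_add, eval_sub, eval_neg, eval_mul, eval_C] at h' h2' ⊢
      linear_combination h' + (γ (2*k+1)) * h2'
    have honec : (p (2*k+1)).coeff (2*k+1) = 1 := by
      have := hmon.coeff_natDegree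
      rwa [hdeg] at this
    have hcT1 : (T1 (p (2*k+1))).coeff (2*k+2) = -1 := by
      have h := T1coeff (p (2*k+1)) (2*k+1) (le_of_eq hdeg)
      have hpow : ((-1:ℂ))^(2*k+1) = -1 := by rw [pow_succ, pow_mul]; norm_num
      rw [show 2*k+1+1 = 2*k+2 from rfl, honec] at h
      linear_combination (h + hpow) / 2
    have hdS1 : (S1 (p (2*k+1))).natDegree ≤ 2*k+2 := by
      rw [hS1e]
      refine le_trans (natDegree_sub_le _ _) (max_le ?_ ?_)
      · exact le_trans (natDegree_C_mul_le _ _) (T1deg (p (2*k+1)) (2*k+1) (le_of_eq hdeg))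
      · exact le_trans (natDegree_C_mul_le _ _) (by omega)
    have hcS1 : (S1 (p (2*k+1))).coeff (2*k+2) = -(2*γ (2*k+1)) := by
      have hz : (p (2*k+1)).coeff (2*k+2) = 0 :=
        coeff_eq_zero_of_natDegree_lt (by omega)
      rw [hS1e, coeff_sub, coeff_C_mul, coeff_C_mul, hcT1, hz]
      ring
    have huniq := aux_uniq p (fun m => (hp m).1) (fun m => (hp m).2.1) Y γ Ypall Ya YC
      hγne (2*k+2) (S1 (p (2*k+1))) hdS1 hYS1
    rw [hcS1] at huniq
    rw [huniq, hγo k]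
    congr 2
    ring
  -- scalar linearity of S0, S1
  have S0C : ∀ (r : ℂ) f, S0 (C r * f) = C r * S0 f := by
    intro r f
    rw [hS0, hS0, YC, U1C, U1C, YC]
    ring
  have S1C : ∀ (r : ℂ) f, S1 (C r * f) = C r * S1 f := by
    intro r f
    rw [hS1, hS1, YC, T1C, T1C, YC]
    ring
  have p0 : p 0 = 1 := (hp 0).1.natDegree_eq_zero.mp ((hp 0).2.1)
  -- final induction
  intro n
  induction n with
  | zero =>
      constructor
      · simp [p0]
      · simp only [Function.iterate_zero, id_eq]
        have h := evenCase 0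
        rw [show (2:ℕ)*0 = 0 from rfl, show (0:ℕ)+1 = 1 from rfl, p0] at h
        rw [show (2:ℕ)*0+1 = 1 from rfl, h, smul_eq_C_mul]
        congr 1
        rw [Finset.prod_range_one]
        push_cast
        ring
  | succ n ih =>
      obtain ⟨ih1, ih2⟩ := ih
      have step1 : (S1 ∘ S0)^[n+1] 1 = S1 (S0 ((S1 ∘ S0)^[n] 1)) := by
        rw [Function.iterate_succ_apply']
        rfl
      have hprod1 : (∏ i ∈ Finset.range (2*n+2), (2*t0 + 2*t1 + 1 + (i : ℂ)))
          = (∏ i ∈ Finset.range (2*n+1), (2*t0 + 2*t1 + 1 + (i : ℂ)))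
            * (2*t0 + 2*t1 + 1 + ((2*n+1 : ℕ) : ℂ)) := by
        rw [show 2*n+2 = (2*n+1)+1 from rfl]
        exact Finset.prod_range_succ _ _
      have hprod2 : (∏ i ∈ Finset.range (2*n+3), (2*t0 + 2*t1 + 1 + (i : ℂ)))
          = (∏ i ∈ Finset.range (2*n+2), (2*t0 + 2*t1 + 1 + (i : ℂ)))
            * (2*t0 + 2*t1 + 1 + ((2*n+2 : ℕ) : ℂ)) := by
        rw [show 2*n+3 = (2*n+2)+1 from rfl]
        exact Finset.prod_range_succ _ _
      have key1 : (S1 ∘ S0)^[n+1] 1 =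
          ((-1)^(n+1) * ∏ i ∈ Finset.range (2*(n+1)), (2*t0 + 2*t1 + 1 + (i : ℂ)))
            • p (2*(n+1)) := by
        rw [step1, ih2, smul_eq_C_mul, S1C, oddCase n, smul_eq_C_mul,
          show 2*(n+1) = 2*n+2 from by ring, ← mul_assoc, ← map_mul, hprod1]
        congr 2
        push_cast
        ring
      refine ⟨key1, ?_⟩
      rw [key1, smul_eq_C_mul, S0C, evenCase (n+1), smul_eq_C_mul,
        show 2*(n+1)+1 = 2*n+3 from by ring,
        show 2*(n+1) = 2*n+2 from by ring, ← mul_assoc, ← map_mul, hprod2]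
      congr 2
      push_cast
      ring
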